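/- Let G = (V, E) be the graph of known entries of an incomplete pairwise comparison matrix. The logarithmic least squares problem min_w Σ_{(i,j)∈E} (log a_{ij} − log(w_i/w_j))², over positive weight vectors w normalized by Σ_i log w_i = 0, has a unique solution if and only if G is connected. -/

import Mathlib

open scoped BigOperators

noncomputable section LLSMAux

variable {n : ℕ}

/-- The incidence-type linear map `y ↦ ((i,j) ↦ if adj then y i - y j else 0)`. -/
def llsmD (G : SimpleGraph (Fin n)) [DecidableRel G.Adj] :
    (Fin n → ℝ) →ₗ[ℝ] EuclideanSpace ℝ (Fin n × Fin n) where
  toFun y := WithLp.toLp 2 (fun p : Fin n × Fin n => if G.Adj p.1 p.2 then y p.1 - y p.2 else 0)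
  map_add' y z := by
    ext p
    by_cases h : G.Adj p.1 p.2 <;> simp [h, PiLp.add_apply] <;> ring
  map_smul' r y := by
    ext p
    by_cases h : G.Adj p.1 p.2 <;> simp [h, PiLp.smul_apply, smul_eq_mul] <;> ring

/-- The target vector of logarithms of known entries. -/
def llsmC (G : SimpleGraph (Fin n)) [DecidableRel G.Adj] (a : Fin n → Fin n → ℝ) :
    EuclideanSpace ℝ (Fin n × Fin n) :=
  WithLp.toLp 2 (fun p : Fin n × Fin n => if G.Adj p.1 p.2 then Real.log (a p.1 p.2) else 0)

lemma llsm_F_eq (G : SimpleGraph (Fin n)) [DecidableRel G.Adj] (a : Fin n → Fin n → ℝ)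
    (y : Fin n → ℝ) :
    (∑ i, ∑ j, if G.Adj i j then (Real.log (a i j) - y i + y j) ^ 2 else 0)
      = ‖llsmC G a - llsmD G y‖ ^ 2 := by
  rw [EuclideanSpace.norm_eq, Real.sq_sqrt (by positivity)]
  rw [Fintype.sum_prod_type]
  refine Finset.sum_congr rfl fun i _ => Finset.sum_congr rfl fun j _ => ?_
  have : (llsmC G a - llsmD G y) (i, j)
      = (if G.Adj i j then Real.log (a i j) else 0)
        - (if G.Adj i j then y i - y j else 0) := by
    simp [llsmC, llsmD, PiLp.sub_apply]
  rw [this]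
  by_cases h : G.Adj i j <;> simp [h, Real.norm_eq_abs, sq_abs] <;> ring

lemma llsmD_eq_zero_iff (G : SimpleGraph (Fin n)) [DecidableRel G.Adj] (u : Fin n → ℝ) :
    llsmD G u = 0 ↔ ∀ i j, G.Adj i j → u i = u j := by
  constructor
  · intro h i j hij
    have := congrArg (fun x => x (i, j)) h
    simpa [llsmD, hij, sub_eq_zero] using this
  · intro h
    ext p
    by_cases hp : G.Adj p.1 p.2 <;> simp [llsmD, hp]
    exact sub_eq_zero.2 (h _ _ hp)

lemma llsm_const_of_reachable {G : SimpleGraph (Fin n)} (u : Fin n → ℝ)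
    (h : ∀ i j, G.Adj i j → u i = u j) {i j : Fin n} (hr : G.Reachable i j) :
    u i = u j := by
  obtain ⟨w⟩ := hr
  induction w with
  | nil => rfl
  | cons hadj _ ih => exact (h _ _ hadj).trans ih

end LLSMAux

set_option maxHeartbeats 1600000 in
/-- The incomplete-LLSM problem: minimize
`∑_{(i,j)∈E} (log a_{ij} − y_i + y_j)²` over `y = log w` with `∑ y_i = 0`.
It has a unique solution iff the graph `G` of known entries is connected. -/
theorem llsm_unique_iff_connected (n : ℕ) (hn : 0 < n)
    (G : SimpleGraph (Fin n)) [DecidableRel G.Adj]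
    (a : Fin n → Fin n → ℝ)
    (hapos : ∀ i j, G.Adj i j → 0 < a i j)
    (harec : ∀ i j, G.Adj i j → a i j * a j i = 1) :
    (∃! y : Fin n → ℝ, (∑ i, y i = 0) ∧
        ∀ z : Fin n → ℝ, (∑ i, z i = 0) →
          (∑ i, ∑ j, if G.Adj i j then (Real.log (a i j) - y i + y j) ^ 2 else 0)
            ≤ (∑ i, ∑ j, if G.Adj i j then (Real.log (a i j) - z i + z j) ^ 2 else 0))
      ↔ G.Connected := by
  classical
  have hn' : (n : ℝ) ≠ 0 := Nat.cast_ne_zero.2 hn.ne'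
  constructor
  · -- unique minimizer → connected
    rintro ⟨y, ⟨hy0, hymin⟩, huniq⟩
    rw [SimpleGraph.connected_iff]
    refine ⟨fun u v => ?_, ⟨⟨0, hn⟩⟩⟩
    by_contra huv
    set k : Fin n → ℝ := fun i => if G.Reachable u i then 1 else 0 with hk
    have hkedge : ∀ i j, G.Adj i j → k i = k j := by
      intro i j hij
      have : G.Reachable u i ↔ G.Reachable u j :=
        ⟨fun h => h.trans hij.reachable, fun h => h.trans hij.symm.reachable⟩
      simp [hk, this]
    set m : ℝ := (∑ i, k i) / n with hm
    set k' : Fin n → ℝ := fun i => k i - m with hk'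
    have hk'edge : ∀ i j, G.Adj i j → k' i = k' j := fun i j hij => by
      simp [hk', hkedge i j hij]
    have hk'sum : ∑ i, k' i = 0 := by
      simp only [hk', Finset.sum_sub_distrib, Finset.sum_const, Finset.card_univ,
        Fintype.card_fin, nsmul_eq_mul, hm]
      field_simp
      ring
    have hy'sum : ∑ i, (y i + k' i) = 0 := by
      rw [Finset.sum_add_distrib, hy0, hk'sum, add_zero]
    have hFeq : (∑ i, ∑ j, if G.Adj i j then
          (Real.log (a i j) - (y i + k' i) + (y j + k' j)) ^ 2 else 0)
        = (∑ i, ∑ j, if G.Adj i j then (Real.log (a i j) - y i + y j) ^ 2 else 0) := by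
      refine Finset.sum_congr rfl fun i _ => Finset.sum_congr rfl fun j _ => ?_
      by_cases h : G.Adj i j
      · simp only [h, if_true]
        rw [hk'edge i j h]; ring
      · simp [h]
    have := huniq (fun i => y i + k' i) ⟨hy'sum, fun z hz => by
      rw [hFeq]; exact hymin z hz⟩
    have hzero : ∀ i, k' i = 0 := by
      intro i
      have := congrFun this i
      simpa using this
    have hru : G.Reachable u u := SimpleGraph.Reachable.refl u
    have h1 : k' u = 1 - m := by simp [hk', hk, hru]
    have h2 : k' v = -m := by simp [hk', hk, huv]
    have e1 := (hzero u).symm.trans h1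
    have e2 := (hzero v).symm.trans h2
    linarith [e1, e2]
  · -- connected → unique minimizer
    intro hconn
    set c := llsmC G a with hc
    set D := llsmD G with hD
    set K : Submodule ℝ (EuclideanSpace ℝ (Fin n × Fin n)) := LinearMap.range D with hK
    obtain ⟨v, hvK, hvmin⟩ := exists_norm_eq_iInf_of_complete_convex
      ⟨0, K.zero_mem⟩ K.complete_of_finiteDimensional K.convex c
    have hvle : ∀ w ∈ K, ‖c - v‖ ≤ ‖c - w‖ := by
      intro w hw
      rw [hvmin]
      exact ciInf_le ⟨0, Set.forall_mem_range.2 fun _ => norm_nonneg _⟩ (⟨w, hw⟩ : K)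
    obtain ⟨z₀, hz₀⟩ := hvK
    set y : Fin n → ℝ := fun i => z₀ i - (∑ j, z₀ j) / n with hy
    have hDy : D y = v := by
      have hsplit : y = z₀ - (fun _ : Fin n => (∑ j, z₀ j) / n) := rfl
      have hconst : D (fun _ : Fin n => (∑ j, z₀ j) / n) = 0 :=
        (llsmD_eq_zero_iff G _).2 fun i j _ => rfl
      rw [hsplit, map_sub, hconst, sub_zero, hz₀]
    have hysum : ∑ i, y i = 0 := by
      simp only [hy, Finset.sum_sub_distrib, Finset.sum_const, Finset.card_univ,
        Fintype.card_fin, nsmul_eq_mul]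
      field_simp
      ring
    have hymin : ∀ z : Fin n → ℝ, (∑ i, z i = 0) →
        (∑ i, ∑ j, if G.Adj i j then (Real.log (a i j) - y i + y j) ^ 2 else 0)
          ≤ (∑ i, ∑ j, if G.Adj i j then (Real.log (a i j) - z i + z j) ^ 2 else 0) := by
      intro z _
      rw [llsm_F_eq, llsm_F_eq, ← hc, ← hD, hDy]
      exact pow_le_pow_left₀ (norm_nonneg _) (hvle (D z) ⟨z, rfl⟩) 2
    refine ⟨y, ⟨hysum, hymin⟩, ?_⟩
    rintro y' ⟨hy'sum, hy'min⟩
    -- both are minimizers with the same value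
    have hFy'le : ‖c - D y'‖ ^ 2 ≤ ‖c - D y‖ ^ 2 := by
      have := hy'min y hysum
      rwa [llsm_F_eq, llsm_F_eq, ← hc, ← hD] at this
    have hFyle : ‖c - D y‖ ^ 2 ≤ ‖c - D y'‖ ^ 2 := by
      have := hymin y' hy'sum
      rwa [llsm_F_eq, llsm_F_eq, ← hc, ← hD] at this
    -- midpoint argument
    set mid : Fin n → ℝ := fun i => (y i + y' i) / 2 with hmid
    have hmidsum : ∑ i, mid i = 0 := by
      simp only [hmid, div_eq_mul_inv, ← Finset.sum_mul, Finset.sum_add_distrib,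
        hysum, hy'sum, add_zero, zero_mul]
    have hmidD : D mid = (2⁻¹ : ℝ) • (D y + D y') := by
      have : mid = (2⁻¹ : ℝ) • (y + y') := by
        funext i; simp [hmid]; ring
      rw [this, map_smul, map_add]
    have key : ‖c - D mid‖ ^ 2
        = (‖c - D y‖ ^ 2 + ‖c - D y'‖ ^ 2) / 2 - ‖D y - D y'‖ ^ 2 / 4 := by
      have h1 : c - D mid = (2⁻¹ : ℝ) • ((c - D y) + (c - D y')) := by
        rw [hmidD]; module
      have hB : ‖(c - D y) - (c - D y')‖ = ‖D y - D y'‖ := by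
        rw [show (c - D y) - (c - D y') = -(D y - D y') by module, norm_neg]
      have par := parallelogram_law_with_norm ℝ (c - D y) (c - D y')
      rw [hB] at par
      rw [h1, norm_smul, show ‖(2⁻¹ : ℝ)‖ = 2⁻¹ by norm_num]
      set A := ‖(c - D y) + (c - D y')‖
      set X := ‖c - D y‖
      set Y := ‖c - D y'‖
      set Z := ‖D y - D y'‖
      linear_combination par / 4
    have hminmid : ‖c - D y‖ ^ 2 ≤ ‖c - D mid‖ ^ 2 := by
      have := hymin mid hmidsum
      rwa [llsm_F_eq, llsm_F_eq, ← hc, ← hD] at this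
    have hDdiff : D y - D y' = 0 := by
      have hsq : ‖D y - D y'‖ ^ 2 ≤ 0 := by linarith [key, hminmid, hFy'le, hFyle]
      have : ‖D y - D y'‖ = 0 := by
        nlinarith [norm_nonneg (D y - D y'), hsq]
      exact norm_eq_zero.1 this
    have hker : D (fun i => y i - y' i) = 0 := by
      have : (fun i => y i - y' i) = y - y' := rfl
      rw [this, map_sub]; exact hDdiff
    have hedge : ∀ i j, G.Adj i j → y i - y' i = y j - y' j := by
      have := (llsmD_eq_zero_iff G (fun i => y i - y' i)).1 (by rw [← hD]; exact hker)
      exact this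
    -- connectivity forces the difference to be constant, and sum-zero forces it to vanish
    set u : Fin n → ℝ := fun i => y i - y' i with hu
    have hconstu : ∀ i, u i = u ⟨0, hn⟩ := fun i =>
      llsm_const_of_reachable u hedge (hconn.preconnected i ⟨0, hn⟩)
    have husum : ∑ i, u i = 0 := by
      simp only [hu, Finset.sum_sub_distrib, hysum, hy'sum, sub_zero]
    have hu0 : u ⟨0, hn⟩ = 0 := by
      have : ∑ i, u i = (n : ℝ) * u ⟨0, hn⟩ := by
        rw [Finset.sum_congr rfl fun i _ => hconstu i]
        simp [Finset.sum_const, Finset.card_univ]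
      rw [husum] at this
      rcases mul_eq_zero.1 this.symm with h | h
      · exact absurd h hn'
      · exact h
    funext i
    have : u i = 0 := (hconstu i).trans hu0
    have := sub_eq_zero.1 this
    linarith [this]
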